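/- arXiv:1803.09418 — 6 statements merged into one kernel-verified Lean document; each statement's English description precedes it below -/
import Mathlib

section
/- Let A be a finite dimensional central simple algebra with 1 over a field F and let σ, τ be nonzero F-algebra endomorphisms of A. Then for any F-linear (σ,τ)-derivation δ of A, there exist units v₁, v₂ in A and an element u ∈ A such that δ(a) = v₁(ua − au)v₂ for all a ∈ A. -/
open TensorProduct
namespace SN7

variable {F A : Type*} [Field F] [Ring A] [Algebra F A]

def rmulOp (F A : Type*) [Field F] [Ring A] [Algebra F A] : Aᵐᵒᵖ →ₐ[F] Module.End F A where
  toFun x := LinearMap.mulRight F x.unop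
  map_one' := LinearMap.mulRight_one F A
  map_mul' x y := by
    ext v
    simp [LinearMap.mulRight_apply, Module.End.mul_apply, mul_assoc]
  map_zero' := by ext v; simp
  map_add' x y := by ext v; simp [mul_add]
  commutes' k := by
    ext v
    simp [Algebra.algebraMap_eq_smul_one, LinearMap.mulRight_apply]

noncomputable def piA (F A : Type*) [Field F] [Ring A] [Algebra F A] :
    (A ⊗[F] Aᵐᵒᵖ) →ₐ[F] Module.End F A :=
  Algebra.TensorProduct.lift (Algebra.lmul F A) (rmulOp F A)
    (fun a b => LinearMap.commute_mulLeft_right a b.unop)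

@[simp] lemma piA_tmul (a : A) (b : Aᵐᵒᵖ) (x : A) :
    piA F A (a ⊗ₜ b) x = a * x * b.unop := by
  simp [piA, Algebra.TensorProduct.lift_tmul, rmulOp, Module.End.mul_apply]
  rw [mul_assoc]

/-- the commutant of the multiplication algebra is the scalars -/
lemma commutant_scalar [Algebra.IsCentral F A] (φ : Module.End F A)
    (h : ∀ a b x : A, φ (a * x * b) = a * φ x * b) :
    ∃ k : F, φ = k • (1 : Module.End F A) := by
  have hc : φ 1 ∈ Subalgebra.center F A := by
    rw [Subalgebra.mem_center_iff]
    intro a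
    have h1 : φ a = a * φ 1 := by simpa using h a 1 1
    have h2 : φ a = φ 1 * a := by simpa using h 1 a 1
    rw [← h1, h2]
  obtain ⟨k, hk⟩ := Algebra.mem_bot.1 (Algebra.IsCentral.out hc)
  refine ⟨k, ?_⟩
  ext x
  have h1 : φ x = x * φ 1 := by simpa using h x 1 1
  rw [LinearMap.smul_apply, Module.End.one_apply, h1, ← hk]
  simp [Algebra.algebraMap_eq_smul_one, mul_smul_comm]

noncomputable def modC (F A : Type*) [Field F] [Ring A] [Algebra F A] :
    Module (A ⊗[F] Aᵐᵒᵖ) A :=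
  Module.compHom A (piA F A).toRingHom

lemma smulC_def (c : A ⊗[F] Aᵐᵒᵖ) (x : A) :
    (letI := modC F A; c • x) = piA F A c x := rfl

lemma isSimpleModule_C [IsSimpleRing A] :
    letI := modC F A
    IsSimpleModule (A ⊗[F] Aᵐᵒᵖ) A := by
  letI := modC F A
  refine @IsSimpleModule.mk _ _ _ _ _ (IsSimpleOrder.mk ?_)
  intro N
  let I : TwoSidedIdeal A := TwoSidedIdeal.mk' (N : Set A)
    (N.zero_mem)
    (fun hx hy => N.add_mem hx hy)
    (fun hx => N.neg_mem hx)
    (fun {x y} hy => by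
      have : (x ⊗ₜ (1 : Aᵐᵒᵖ)) • y ∈ N := N.smul_mem _ hy
      rwa [smulC_def, piA_tmul, MulOpposite.unop_one, mul_one] at this)
    (fun {x y} hx => by
      have : ((1 : A) ⊗ₜ (MulOpposite.op y)) • x ∈ N := N.smul_mem _ hx
      rwa [smulC_def, piA_tmul, MulOpposite.unop_op, one_mul] at this)
  have hmem : ∀ x : A, x ∈ I ↔ x ∈ N := fun x => TwoSidedIdeal.mem_mk' _ _ _ _ _ _ x
  rcases IsSimpleRing.simple.eq_bot_or_eq_top I with h | h
  · left
    ext x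
    simp only [Submodule.mem_bot]
    rw [← hmem, h]
    exact TwoSidedIdeal.mem_bot _
  · right
    ext x
    simp only [Submodule.mem_top, iff_true]
    rw [← hmem, h]
    exact TwoSidedIdeal.mem_top _


section Density
variable [Algebra.IsCentral F A] [IsSimpleRing A] [FiniteDimensional F A]

lemma piA_surjective : Function.Surjective (piA F A) := by
  classical
  letI := modC F A
  haveI hsimp : IsSimpleModule (A ⊗[F] Aᵐᵒᵖ) A := isSimpleModule_C
  intro φ
  set m := Module.finrank F A with hm
  let b : Module.Basis (Fin m) F A := Module.finBasis F A
  -- semisimplicity of (Fin m → A) as a (A ⊗ Aᵐᵒᵖ)-module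
  have hss : IsSemisimpleModule (A ⊗[F] Aᵐᵒᵖ) (Fin m → A) := by
    refine isSemisimpleModule_of_isSemisimpleModule_submodule'
      (p := fun i => LinearMap.range (LinearMap.single (A ⊗[F] Aᵐᵒᵖ) (fun _ : Fin m => A) i))
      (fun i => ?_) ?_
    · have inj : Function.Injective (LinearMap.single (A ⊗[F] Aᵐᵒᵖ) (fun _ : Fin m => A) i) :=
        fun x y h => by simpa using congrFun h i
      exact IsSemisimpleModule.congr (LinearEquiv.ofInjective _ inj).symm
    · simp_rw [LinearMap.range_eq_map, Submodule.iSup_map_single, Submodule.pi_top]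
  let X : Fin m → A := fun i => b i
  set N : Submodule (A ⊗[F] Aᵐᵒᵖ) (Fin m → A) := Submodule.span _ {X} with hN
  obtain ⟨W, hW⟩ := exists_isCompl N
  let p := N.projectionOnto W hW
  let q : (Fin m → A) →ₗ[A ⊗[F] Aᵐᵒᵖ] (Fin m → A) := N.subtype ∘ₗ p
  have hqX : q X = X := by
    have : X ∈ N := Submodule.mem_span_singleton_self X
    simp only [q, LinearMap.comp_apply]
    rw [Submodule.projectionOnto_apply_left hW ⟨X, this⟩]
    rfl
  -- entries of q are scalars
  have hscal : ∀ i j : Fin m, ∃ k : F, ∀ x : A,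
      (q (Pi.single j x)) i = k • x := by
    intro i j
    let qij : A →ₗ[A ⊗[F] Aᵐᵒᵖ] A :=
      (LinearMap.proj i) ∘ₗ q ∘ₗ (LinearMap.single (A ⊗[F] Aᵐᵒᵖ) (fun _ : Fin m => A) j)
    have hFlin : ∀ (k : F) (x : A), qij (k • x) = k • qij x := by
      intro k x
      have h1 : (k • x : A) = (algebraMap F (A ⊗[F] Aᵐᵒᵖ) k) • x := by
        rw [smulC_def]
        rw [AlgHom.commutes]
        simp [Module.algebraMap_end_apply]
      have h2 : (k • qij x : A) = (algebraMap F (A ⊗[F] Aᵐᵒᵖ) k) • qij x := by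
        rw [smulC_def, AlgHom.commutes]
        simp [Module.algebraMap_end_apply]
      rw [h1, h2, map_smul]
    let φij : Module.End F A :=
      { toFun := qij
        map_add' := qij.map_add
        map_smul' := hFlin }
    have hcomm : ∀ a c x : A, φij (a * x * c) = a * φij x * c := by
      intro a c x
      have : (a ⊗ₜ[F] (MulOpposite.op c)) • x = a * x * c := by
        rw [smulC_def, piA_tmul, MulOpposite.unop_op]
      rw [← this, show φij ((a ⊗ₜ[F] (MulOpposite.op c)) • x) = qij ((a ⊗ₜ[F] MulOpposite.op c) • x) from rfl,
        map_smul, smulC_def, piA_tmul, MulOpposite.unop_op]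
      rfl
    obtain ⟨k, hk⟩ := commutant_scalar φij hcomm
    refine ⟨k, fun x => ?_⟩
    have := congrFun (congrArg (fun (f : Module.End F A) => (f : A → A)) hk) x
    simpa [φij, qij] using this
  choose k hk using hscal
  have hq' : ∀ Y : Fin m → A, ∀ i, q Y i = ∑ j, k i j • Y j := by
    intro Y i
    have hY : Y = ∑ j, Pi.single j (Y j) := (Finset.univ_sum_single Y).symm
    calc q Y i = q (∑ j, Pi.single j (Y j)) i := by rw [← hY]
    _ = ∑ j, q (Pi.single j (Y j)) i := by rw [map_sum]; simp [Finset.sum_apply]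
    _ = ∑ j, k i j • Y j := by simp_rw [hk]
  -- φ applied componentwise to X lies in N
  have hmem : (fun i => φ (X i)) ∈ N := by
    have h1 : (fun i => φ (X i)) = q (fun i => φ (X i)) := by
      funext i
      rw [hq' _ i]
      have : φ (X i) = φ (q X i) := by rw [hqX]
      rw [this, hq' _ i, map_sum]
      simp_rw [map_smul]
    rw [h1]
    have : q (fun i => φ (X i)) = N.subtype (p (fun i => φ (X i))) := rfl
    rw [this]
    exact (p _).2
  rw [hN, Submodule.mem_span_singleton] at hmem
  obtain ⟨c, hc⟩ := hmem
  refine ⟨c, ?_⟩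
  apply Module.Basis.ext (b := b)
  intro i
  have h2 : c • (X i) = φ (X i) := congrFun hc i
  rw [smulC_def] at h2
  exact h2


lemma piA_bijective : Function.Bijective (piA F A) := by
  have hsurj := piA_surjective (F := F) (A := A)
  have hdim : Module.finrank F (A ⊗[F] Aᵐᵒᵖ) = Module.finrank F (Module.End F A) := by
    rw [Module.finrank_tensorProduct]
    rw [show Module.finrank F (Module.End F A) = Module.finrank F A * Module.finrank F A from
      Module.finrank_linearMap (R := F) (S := F) (M := A) (N := A)]
    congr 1
    exact ((MulOpposite.opLinearEquiv F (M := A)).finrank_eq).symm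
  have := (LinearMap.injective_iff_surjective_of_finrank_eq_finrank hdim
    (f := (piA F A).toLinearMap)).2 hsurj
  exact ⟨this, hsurj⟩

noncomputable def piE (F A : Type*) [Field F] [Ring A] [Algebra F A]
    [Algebra.IsCentral F A] [IsSimpleRing A] [FiniteDimensional F A] :
    (A ⊗[F] Aᵐᵒᵖ) ≃ₐ[F] Module.End F A :=
  AlgEquiv.ofBijective (piA F A) piA_bijective

@[simp] lemma piE_tmul (a : A) (b : Aᵐᵒᵖ) (x : A) :
    piE F A (a ⊗ₜ b) x = a * x * b.unop := piA_tmul a b x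

end Density

section AutInner

variable [FiniteDimensional F A]

/-- rank one endomorphism -/
noncomputable def rk1 (ψ : Module.Dual F A) (x : A) : Module.End F A := ψ.smulRight x

lemma rk1_apply (ψ : Module.Dual F A) (x y : A) : rk1 ψ x y = ψ y • x := rfl

lemma comp_rk1 (f : Module.End F A) (ψ : Module.Dual F A) (x : A) :
    f * rk1 ψ x = rk1 ψ (f x) := by
  ext y
  simp [rk1_apply, Module.End.mul_apply, map_smul]

/-- every nonzero vector admits a dual functional with value 1 -/
lemma exists_dual (x : A) (hx : x ≠ 0) : ∃ ψ : Module.Dual F A, ψ x = 1 := by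
  have := (Module.forall_dual_apply_eq_zero_iff F x).not.2 hx
  push_neg at this
  obtain ⟨ψ, hψ⟩ := this
  exact ⟨(ψ x)⁻¹ • ψ, by simp [inv_mul_cancel₀ hψ]⟩

/-- Every bijective algebra endomorphism of `End F A` is given by conjugation
by a bijective linear map. -/
lemma aut_end_inner [Nontrivial A] (α : Module.End F A →ₐ[F] Module.End F A)
    (hα : Function.Bijective α) :
    ∃ T : Module.End F A, Function.Bijective T ∧ ∀ e x, α e (T x) = T (e x) := by
  obtain ⟨φ₀, hφ₀⟩ := exists_dual (F := F) (1 : A) one_ne_zero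
  set e₀ : Module.End F A := rk1 φ₀ 1 with he₀
  have he₀ne : e₀ ≠ 0 := by
    intro h
    have h1 : e₀ 1 = 1 := by rw [he₀, rk1_apply, hφ₀, one_smul]
    rw [h] at h1
    exact one_ne_zero (α := A) (by simpa using h1.symm)
  have hαe₀ : α e₀ ≠ 0 := fun h => he₀ne (hα.1 (by rw [h, map_zero]))
  obtain ⟨s₀, hs₀⟩ : ∃ s₀ : A, α e₀ s₀ ≠ 0 := by
    by_contra h
    push_neg at h
    exact hαe₀ (LinearMap.ext fun y => h y)
  set s' : A := α e₀ s₀ with hs'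
  have he₀e₀ : e₀ * e₀ = e₀ := by
    ext y
    simp only [Module.End.mul_apply, he₀, rk1_apply, map_smul, hφ₀, smul_eq_mul, mul_one,
      smul_smul, one_smul]
  have hs'fix : α e₀ s' = s' := by
    rw [hs', ← Module.End.mul_apply, ← map_mul, he₀e₀]
  let T : Module.End F A :=
    (LinearMap.applyₗ s') ∘ₗ α.toLinearMap ∘ₗ (LinearMap.smulRightₗ φ₀)
  have hTdef : ∀ x, T x = α (rk1 φ₀ x) s' := fun _ => rfl
  have hcomm : ∀ e x, α e (T x) = T (e x) := by
    intro e x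
    rw [hTdef, hTdef, ← comp_rk1, map_mul, Module.End.mul_apply]
  have hT1 : T 1 = s' := by
    have : rk1 φ₀ (1 : A) = e₀ := he₀.symm
    rw [hTdef, this, hs'fix]
  have hTker : ∀ x, T x = 0 → x = 0 := by
    intro x hx
    by_contra hxne
    obtain ⟨ψ, hψ⟩ := exists_dual (F := F) x hxne
    have h1 : rk1 ψ 1 x = 1 := by rw [rk1_apply, hψ, one_smul]
    have h2 : T 1 = 0 := by rw [← h1, ← hcomm, hx, map_zero]
    rw [hT1] at h2
    exact hs₀ h2
  have hTinj : Function.Injective T := by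
    intro x y h
    exact sub_eq_zero.mp (hTker (x - y) (by rw [map_sub, h, sub_self]))
  have hTsurj : Function.Surjective T := by
    intro t
    obtain ⟨ψ', hψ'⟩ := exists_dual (F := F) s' hs₀
    obtain ⟨f, hf⟩ := hα.2 (rk1 ψ' t)
    refine ⟨f 1, ?_⟩
    calc T (f 1) = α f (T 1) := (hcomm f 1).symm
    _ = rk1 ψ' t s' := by rw [hT1, hf]
    _ = t := by rw [rk1_apply, hψ', one_smul]
  exact ⟨T, ⟨hTinj, hTsurj⟩, hcomm⟩


end AutInner

section SN
variable [Algebra.IsCentral F A] [IsSimpleRing A] [FiniteDimensional F A]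

lemma algHom_bijective (σ : A →ₐ[F] A) : Function.Bijective σ := by
  have hinj : Function.Injective σ := RingHom.injective (σ : A →+* A)
  exact ⟨hinj, (LinearMap.injective_iff_surjective (f := σ.toLinearMap)).1 hinj⟩

lemma skolem_noether (σ : A →ₐ[F] A) :
    ∃ s : Aˣ, ∀ a : A, σ a = (s : A) * a * ((s⁻¹ : Aˣ) : A) := by
  have hσ := algHom_bijective σ
  let σe : A ≃ₐ[F] A := AlgEquiv.ofBijective σ hσ
  let Θe := Algebra.TensorProduct.congr σe (AlgEquiv.refl (A₁ := Aᵐᵒᵖ) (R := F))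
  let α := ((piE F A).symm.trans Θe).trans (piE F A)
  obtain ⟨T, hTbij, hT⟩ := aut_end_inner α.toAlgHom α.bijective
  have key : ∀ (a : A) (b : Aᵐᵒᵖ) (x : A),
      α.toAlgHom (piE F A (a ⊗ₜ[F] b)) x = σ a * x * b.unop := by
    intro a b x
    show α (piE F A (a ⊗ₜ[F] b)) x = σ a * x * b.unop
    have h1 : α (piE F A (a ⊗ₜ[F] b)) = piE F A (Θe (a ⊗ₜ[F] b)) := by
      simp only [α, AlgEquiv.trans_apply, AlgEquiv.symm_apply_apply]
    have h2 : Θe (a ⊗ₜ[F] b) = σ a ⊗ₜ[F] b := by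
      rw [show Θe (a ⊗ₜ[F] b) = Algebra.TensorProduct.congr σe AlgEquiv.refl (a ⊗ₜ[F] b) from rfl,
        Algebra.TensorProduct.congr_apply]
      rfl
    rw [h1, h2, piE_tmul]
  -- T is right-multiplication-equivariant
  have hright : ∀ c x : A, T (x * c) = T x * c := by
    intro c x
    have := hT (piE F A ((1 : A) ⊗ₜ[F] MulOpposite.op c)) x
    rw [key] at this
    rw [piE_tmul] at this
    simpa using this.symm
  have hleft : ∀ a x : A, σ a * T x = T (a * x) := by
    intro a x
    have := hT (piE F A (a ⊗ₜ[F] (1 : Aᵐᵒᵖ))) x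
    rw [key] at this
    rw [piE_tmul] at this
    simpa using this
  set t₀ : A := T 1 with ht₀
  have hTeq : ∀ x, T x = t₀ * x := by
    intro x
    have := hright x 1
    simpa using this
  obtain ⟨y, hy⟩ : ∃ y, t₀ * y = 1 := by
    obtain ⟨y, hy⟩ := hTbij.2 1
    exact ⟨y, by rw [← hTeq]; exact hy⟩
  have hyt : y * t₀ = 1 := by
    have h0 : t₀ * (y * t₀ - 1) = 0 := by
      rw [mul_sub, ← mul_assoc, hy, one_mul, mul_one, sub_self]
    have := hTbij.1 (a₁ := y * t₀ - 1) (a₂ := 0) (by rw [hTeq, hTeq, h0, mul_zero])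
    rwa [sub_eq_zero] at this
  refine ⟨⟨t₀, y, hy, hyt⟩, fun a => ?_⟩
  have h1 : σ a * t₀ = t₀ * a := by
    have h2 := hleft a 1
    rw [mul_one, ← ht₀, hTeq a] at h2
    exact h2
  show σ a = t₀ * a * y
  calc σ a = σ a * (t₀ * y) := by rw [hy, mul_one]
  _ = (σ a * t₀) * y := by rw [mul_assoc]
  _ = t₀ * a * y := by rw [h1]

end SN

section Semisimple
variable [Algebra.IsCentral F A] [IsSimpleRing A] [FiniteDimensional F A]

lemma isSimpleModule_end : IsSimpleModule (Module.End F A) A := by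
  refine @IsSimpleModule.mk _ _ _ _ _ (IsSimpleOrder.mk ?_)
  intro N
  rcases eq_or_ne N ⊥ with h | h
  · exact Or.inl h
  · right
    obtain ⟨x, hxN, hx0⟩ := Submodule.exists_mem_ne_zero_of_ne_bot h
    obtain ⟨ψ, hψ⟩ := exists_dual (F := F) x hx0
    ext y
    simp only [Submodule.mem_top, iff_true]
    have : (rk1 ψ y) • x = y := by
      show rk1 ψ y x = y
      rw [rk1_apply, hψ, one_smul]
    rw [← this]
    exact N.smul_mem _ hxN

lemma isSemisimpleRing_end : IsSemisimpleRing (Module.End F A) := by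
  classical
  haveI := isSimpleModule_end (F := F) (A := A)
  set m := Module.finrank F A with hm
  let b : Module.Basis (Fin m) F A := Module.finBasis F A
  have hss : IsSemisimpleModule (Module.End F A) (Fin m → A) := by
    refine isSemisimpleModule_of_isSemisimpleModule_submodule'
      (p := fun i => LinearMap.range (LinearMap.single (Module.End F A) (fun _ : Fin m => A) i))
      (fun i => ?_) ?_
    · have inj : Function.Injective (LinearMap.single (Module.End F A) (fun _ : Fin m => A) i) :=
        fun x y h => by simpa using congrFun h i
      exact IsSemisimpleModule.congr (LinearEquiv.ofInjective _ inj).symm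
    · simp_rw [LinearMap.range_eq_map, Submodule.iSup_map_single, Submodule.pi_top]
  let gE : Module.End F A →ₗ[Module.End F A] (Fin m → A) :=
    { toFun := fun e => fun i => e (b i)
      map_add' := fun e f => rfl
      map_smul' := fun e f => rfl }
  have hinj : Function.Injective gE := by
    intro e f h
    refine Module.Basis.ext (b := b) ?_
    intro i
    exact congrFun h i
  exact IsSemisimpleModule.of_injective gE hinj

lemma isSemisimpleRing_C : IsSemisimpleRing (A ⊗[F] Aᵐᵒᵖ) := by
  haveI := isSemisimpleRing_end (F := F) (A := A)
  exact RingEquiv.isSemisimpleRing (R := Module.End F A) (S := A ⊗[F] Aᵐᵒᵖ) (piE F A).symm.toRingEquiv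

end Semisimple

section Deriv
variable [Algebra.IsCentral F A] [IsSimpleRing A] [FiniteDimensional F A]

lemma derivation_inner (g : A →ₗ[F] A) (hg : ∀ a b : A, g (a * b) = g a * b + a * g b) :
    ∃ u : A, ∀ a : A, g a = u * a - a * u := by
  have hg1 : g 1 = 0 := by
    have h2 := hg 1 1
    simp only [mul_one, one_mul] at h2
    have h3 : g 1 + g 1 = g 1 + 0 := by rw [add_zero, ← h2]
    exact add_left_cancel h3
  -- twisted action on A × A
  let Lf : A → Module.End F (A × A) := fun a =>
    (LinearMap.mulLeft F a).prodMap (LinearMap.mulLeft F a) +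
      (LinearMap.inl F A A) ∘ₗ (LinearMap.mulLeft F (g a)) ∘ₗ (LinearMap.snd F A A)
  have Lf_apply : ∀ (a : A) (p : A × A), Lf a p = (a * p.1 + g a * p.2, a * p.2) := by
    intro a p
    simp [Lf, LinearMap.mulLeft_apply]
  have Lf_add : ∀ a b : A, Lf (a + b) = Lf a + Lf b := by
    intro a b
    refine LinearMap.ext fun p => ?_
    show Lf (a + b) p = Lf a p + Lf b p
    rw [Lf_apply, Lf_apply, Lf_apply, map_add, Prod.mk_add_mk, Prod.mk.injEq]
    exact ⟨by noncomm_ring, by noncomm_ring⟩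
  have Lf_smul : ∀ (k : F) (a : A), Lf (k • a) = k • Lf a := by
    intro k a
    refine LinearMap.ext fun p => ?_
    show Lf (k • a) p = k • Lf a p
    rw [Lf_apply, Lf_apply, map_smul, Prod.smul_mk, Prod.mk.injEq]
    exact ⟨by simp [smul_mul_assoc, smul_add], by simp [smul_mul_assoc]⟩
  have Lf_one : Lf 1 = 1 := by
    refine LinearMap.ext fun p => ?_
    show Lf 1 p = p
    rw [Lf_apply, hg1]
    simp
  have Lf_mul : ∀ a b : A, Lf (a * b) = Lf a * Lf b := by
    intro a b
    refine LinearMap.ext fun p => ?_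
    show Lf (a * b) p = Lf a (Lf b p)
    rw [Lf_apply, Lf_apply, Lf_apply, hg, Prod.mk.injEq]
    exact ⟨by noncomm_ring, by noncomm_ring⟩
  let ρ₁ : A →ₐ[F] Module.End F (A × A) :=
    AlgHom.ofLinearMap { toFun := Lf, map_add' := Lf_add, map_smul' := Lf_smul } Lf_one Lf_mul
  have ρ₁_apply : ∀ (a : A) (p : A × A), ρ₁ a p = (a * p.1 + g a * p.2, a * p.2) :=
    fun a p => Lf_apply a p
  let Rf : Aᵐᵒᵖ → Module.End F (A × A) := fun bo =>
    (LinearMap.mulRight F bo.unop).prodMap (LinearMap.mulRight F bo.unop)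
  have Rf_apply : ∀ (bo : Aᵐᵒᵖ) (p : A × A), Rf bo p = (p.1 * bo.unop, p.2 * bo.unop) :=
    fun bo p => rfl
  have Rf_add : ∀ a b : Aᵐᵒᵖ, Rf (a + b) = Rf a + Rf b := by
    intro a b
    refine LinearMap.ext fun p => ?_
    show Rf (a + b) p = Rf a p + Rf b p
    rw [Rf_apply, Rf_apply, Rf_apply, MulOpposite.unop_add, Prod.mk_add_mk, Prod.mk.injEq]
    exact ⟨by noncomm_ring, by noncomm_ring⟩
  have Rf_smul : ∀ (k : F) (a : Aᵐᵒᵖ), Rf (k • a) = k • Rf a := by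
    intro k a
    refine LinearMap.ext fun p => ?_
    show Rf (k • a) p = k • Rf a p
    rw [Rf_apply, Rf_apply, MulOpposite.unop_smul, Prod.smul_mk, Prod.mk.injEq]
    exact ⟨by simp [mul_smul_comm], by simp [mul_smul_comm]⟩
  have Rf_one : Rf 1 = 1 := by
    refine LinearMap.ext fun p => ?_
    show Rf 1 p = p
    rw [Rf_apply]
    simp
  have Rf_mul : ∀ a b : Aᵐᵒᵖ, Rf (a * b) = Rf a * Rf b := by
    intro a b
    refine LinearMap.ext fun p => ?_
    show Rf (a * b) p = Rf a (Rf b p)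
    rw [Rf_apply, Rf_apply, Rf_apply, MulOpposite.unop_mul, Prod.mk.injEq]
    exact ⟨by noncomm_ring, by noncomm_ring⟩
  let ρ₂ : Aᵐᵒᵖ →ₐ[F] Module.End F (A × A) :=
    AlgHom.ofLinearMap { toFun := Rf, map_add' := Rf_add, map_smul' := Rf_smul } Rf_one Rf_mul
  have ρ₂_apply : ∀ (bo : Aᵐᵒᵖ) (p : A × A), ρ₂ bo p = (p.1 * bo.unop, p.2 * bo.unop) :=
    fun bo p => rfl
  have hcomm : ∀ (a : A) (bo : Aᵐᵒᵖ), Commute (ρ₁ a) (ρ₂ bo) := by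
    intro a bo
    refine LinearMap.ext fun p => ?_
    show ρ₁ a (ρ₂ bo p) = ρ₂ bo (ρ₁ a p)
    simp only [ρ₁_apply, ρ₂_apply, Prod.mk.injEq]
    constructor <;> noncomm_ring
  let ρ : (A ⊗[F] Aᵐᵒᵖ) →ₐ[F] Module.End F (A × A) :=
    Algebra.TensorProduct.lift ρ₁ ρ₂ hcomm
  have ρ_tmul : ∀ (a : A) (bo : Aᵐᵒᵖ) (p : A × A),
      ρ (a ⊗ₜ[F] bo) p = (a * p.1 * bo.unop + g a * p.2 * bo.unop, a * p.2 * bo.unop) := by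
    intro a bo p
    show (ρ₁ a * ρ₂ bo) p = _
    rw [Module.End.mul_apply, ρ₂_apply, ρ₁_apply]
    simp only [Prod.mk.injEq]
    constructor <;> noncomm_ring
  letI modP : Module (A ⊗[F] Aᵐᵒᵖ) (A × A) := Module.compHom _ ρ.toRingHom
  have smulP_def : ∀ (c : A ⊗[F] Aᵐᵒᵖ) (p : A × A), c • p = ρ c p := fun _ _ => rfl
  haveI : IsSemisimpleRing (A ⊗[F] Aᵐᵒᵖ) := isSemisimpleRing_C
  -- the submodule A × 0
  let N : Submodule (A ⊗[F] Aᵐᵒᵖ) (A × A) :=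
    { carrier := {p | p.2 = 0}
      add_mem' := by
        intro p q hp hq
        show (p + q).2 = 0
        rw [Prod.snd_add, hp, hq, add_zero]
      zero_mem' := rfl
      smul_mem' := by
        intro c p hp
        show (c • p).2 = 0
        rw [smulP_def]
        induction c using TensorProduct.induction_on with
        | zero => simp
        | tmul a bo =>
          rw [ρ_tmul]
          show a * p.2 * bo.unop = 0
          rw [hp, mul_zero, zero_mul]
        | add c₁ c₂ h₁ h₂ => rw [map_add, LinearMap.add_apply, Prod.snd_add, h₁, h₂, add_zero] }
  have memN : ∀ p : A × A, p ∈ N ↔ p.2 = 0 := fun p => Iff.rfl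
  obtain ⟨W, hW⟩ := exists_isCompl N
  obtain ⟨n1, w1, hnw1, -⟩ := Submodule.existsUnique_add_of_isCompl hW ((0 : A), (1 : A))
  have hQw1 : (w1 : A × A).2 = 1 := by
    have h0 : ((n1 : A × A) + (w1 : A × A)).2 = 1 := by rw [hnw1]
    rw [Prod.snd_add, (memN _).1 n1.2, zero_add] at h0
    exact h0
  set v : A := (w1 : A × A).1 with hv
  have hw1eq : (w1 : A × A) = (v, 1) := by
    rw [Prod.ext_iff]
    exact ⟨rfl, hQw1⟩
  have huniq : ∀ x y : A × A, x ∈ W → y ∈ W → x.2 = y.2 → x = y := by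
    intro x y hx hy hQ
    have hmem : x - y ∈ N ⊓ W := by
      constructor
      · show (x - y).2 = 0
        rw [Prod.snd_sub, hQ, sub_self]
      · exact W.sub_mem hx hy
    have := hW.disjoint.le_bot hmem
    rw [Submodule.mem_bot] at this
    exact sub_eq_zero.mp this
  refine ⟨v, fun a => ?_⟩
  have h1 : (a ⊗ₜ[F] (1 : Aᵐᵒᵖ)) • (w1 : A × A) ∈ W := W.smul_mem _ w1.2
  have h2 : ((1 : A) ⊗ₜ[F] MulOpposite.op a) • (w1 : A × A) ∈ W := W.smul_mem _ w1.2
  have e1 : (a ⊗ₜ[F] (1 : Aᵐᵒᵖ)) • (w1 : A × A) = (a * v + g a, a) := by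
    rw [smulP_def, hw1eq, ρ_tmul]
    simp
  have e2 : ((1 : A) ⊗ₜ[F] MulOpposite.op a) • (w1 : A × A) = (v * a, a) := by
    rw [smulP_def, hw1eq, ρ_tmul]
    simp [hg1]
  rw [e1] at h1
  rw [e2] at h2
  have heq : ((a * v + g a : A), a) = ((v * a : A), a) := huniq _ _ h1 h2 rfl
  have h3 : a * v + g a = v * a := congrArg Prod.fst heq
  rw [← h3]
  abel

end Deriv
end SN7

theorem stmt_7 {F A : Type*} [Field F] [Ring A] [Algebra F A]
    [Algebra.IsCentral F A] [IsSimpleRing A] [FiniteDimensional F A]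
    (σ τ : A →ₐ[F] A) (hσ : ⇑σ ≠ 0) (hτ : ⇑τ ≠ 0)
    (δ : A →ₗ[F] A)
    (hδ : ∀ a b : A, δ (a * b) = δ a * τ b + σ a * δ b) :
    ∃ (v₁ v₂ : Aˣ) (u : A), ∀ a : A, δ a = (v₁ : A) * (u * a - a * u) * (v₂ : A) := by
  obtain ⟨s, hs⟩ := SN7.skolem_noether σ
  obtain ⟨t, ht⟩ := SN7.skolem_noether τ
  let g : A →ₗ[F] A :=
    (LinearMap.mulRight F (t : A)) ∘ₗ (LinearMap.mulLeft F ((s⁻¹ : Aˣ) : A)) ∘ₗ δ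
  have g_apply : ∀ a : A, g a = ((s⁻¹ : Aˣ) : A) * δ a * (t : A) := fun a => rfl
  have hτb : ∀ b : A, τ b * (t : A) = (t : A) * b := by
    intro b
    rw [ht, mul_assoc, Units.inv_mul, mul_one]
  have hσa : ∀ a : A, ((s⁻¹ : Aˣ) : A) * σ a = a * ((s⁻¹ : Aˣ) : A) := by
    intro a
    rw [hs, ← mul_assoc, ← mul_assoc, Units.inv_mul, one_mul]
  have hgd : ∀ a b : A, g (a * b) = g a * b + a * g b := by
    intro a b
    calc g (a * b) = ((s⁻¹ : Aˣ) : A) * (δ a * τ b + σ a * δ b) * (t : A) := by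
          rw [g_apply, hδ]
    _ = ((s⁻¹ : Aˣ) : A) * δ a * (τ b * (t : A)) +
          (((s⁻¹ : Aˣ) : A) * σ a) * (δ b * (t : A)) := by noncomm_ring
    _ = ((s⁻¹ : Aˣ) : A) * δ a * ((t : A) * b) +
          (a * ((s⁻¹ : Aˣ) : A)) * (δ b * (t : A)) := by rw [hτb, hσa]
    _ = g a * b + a * g b := by rw [g_apply, g_apply]; noncomm_ring
  obtain ⟨u, hu⟩ := SN7.derivation_inner g hgd
  refine ⟨s, t⁻¹, u, fun a => ?_⟩
  have h1 := hu a
  rw [g_apply] at h1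
  calc δ a = (s : A) * (((s⁻¹ : Aˣ) : A) * δ a * (t : A)) * ((t⁻¹ : Aˣ) : A) := by
        rw [show (s : A) * (((s⁻¹ : Aˣ) : A) * δ a * (t : A)) * ((t⁻¹ : Aˣ) : A) =
          ((s : A) * ((s⁻¹ : Aˣ) : A)) * δ a * ((t : A) * ((t⁻¹ : Aˣ) : A)) from by noncomm_ring,
          Units.mul_inv, Units.mul_inv, one_mul, mul_one]
  _ = (s : A) * (u * a - a * u) * ((t⁻¹ : Aˣ) : A) := by rw [h1]
end

section
/- Let A be a finite dimensional central simple algebra with 1 over a field F and let σ, τ be nonzero F-algebra endomorphisms of A. Then every F-linear (σ,τ)-derivation δ of A is (σ,τ)-inner: there exists u ∈ A such that δ(a) = uτ(a) − σ(a)u for all a ∈ A. -/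
open scoped TensorProduct

section Aux

variable {F A : Type*} [Field F] [Ring A] [Algebra F A]

/-- In a simple ring, any nonzero element generates 1 via two-sided combinations;
we package what we need: the key linear-independence lemma (Artin–Whaples style). -/
private lemma key_indep [Algebra.IsCentral F A] [IsSimpleRing A]
    {ι : Type*} {b : ι → A} (hb : LinearIndependent F b) :
    ∀ (s : Finset ι) (a : ι → A),
      (∀ x : A, ∑ i ∈ s, a i * x * b i = 0) → ∀ i ∈ s, a i = 0 := by
  classical
  intro s
  induction s using Finset.strongInduction with
  | _ s IH =>
    intro a ha
    by_contra hc
    push_neg at hc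
    obtain ⟨j, hj, haj⟩ := hc
    -- the additive subgroup of possible j-th coordinates of solution families
    set P : AddSubgroup A :=
      { carrier := {r | ∃ a' : ι → A, (∀ x : A, ∑ i ∈ s, a' i * x * b i = 0) ∧ a' j = r}
        add_mem' := by
          rintro r₁ r₂ ⟨a₁, h₁, rfl⟩ ⟨a₂, h₂, rfl⟩
          exact ⟨a₁ + a₂, fun x => by
            simp only [Pi.add_apply, add_mul, Finset.sum_add_distrib, h₁ x, h₂ x, add_zero],
            rfl⟩
        zero_mem' := ⟨0, fun x => by simp, rfl⟩
        neg_mem' := by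
          rintro r ⟨a', h', rfl⟩
          exact ⟨-a', fun x => by
            simp only [Pi.neg_apply, neg_mul, Finset.sum_neg_distrib, h' x, neg_zero], rfl⟩ } with hP
    have habs : ∀ (x y r : A), r ∈ P → x * r * y ∈ P := by
      rintro x y r ⟨a', h', rfl⟩
      refine ⟨fun i => x * a' i * y, fun z => ?_, rfl⟩
      have : ∀ i ∈ s, x * a' i * y * z * b i = x * (a' i * (y * z) * b i) := by
        intro i _; simp only [mul_assoc]
      calc ∑ i ∈ s, x * a' i * y * z * b i = ∑ i ∈ s, x * (a' i * (y * z) * b i) :=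
            Finset.sum_congr rfl this
        _ = x * ∑ i ∈ s, a' i * (y * z) * b i := (Finset.mul_sum _ _ _).symm
        _ = 0 := by rw [h' (y * z), mul_zero]
    have hspan : TwoSidedIdeal.span {a j} = ⊤ := by
      rcases (IsSimpleRing.simple (R := A)).eq_bot_or_eq_top (TwoSidedIdeal.span {a j}) with h | h
      · exfalso
        have : a j ∈ TwoSidedIdeal.span {a j} := TwoSidedIdeal.subset_span rfl
        rw [h] at this
        exact haj this
      · exact h
    have h1P : (1 : A) ∈ P := by
      have h1 : (1 : A) ∈ TwoSidedIdeal.span {a j} := by rw [hspan]; trivial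
      rw [TwoSidedIdeal.mem_span_iff_mem_addSubgroup_closure] at h1
      refine AddSubgroup.closure_le P |>.2 ?_ h1
      rintro r ⟨-, ⟨x, -, t, rfl : t = a j, rfl⟩, y, -, rfl⟩
      exact habs x y (a j) ⟨a, ha, rfl⟩
    obtain ⟨a', ha', ha'j⟩ := h1P
    -- each a' i commutes with everything
    have hcomm : ∀ (z : A), ∀ i ∈ s, z * a' i = a' i * z := by
      intro z
      set ca : ι → A := fun i => z * a' i - a' i * z with hca
      have hca0 : ∀ x : A, ∑ i ∈ s, ca i * x * b i = 0 := by
        intro x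
        have : ∀ i ∈ s, ca i * x * b i = z * (a' i * x * b i) - a' i * (z * x) * b i := by
          intro i _
          simp only [hca, sub_mul, mul_assoc]
        rw [Finset.sum_congr rfl this, Finset.sum_sub_distrib, ← Finset.mul_sum, ha' x,
          mul_zero, ha' (z * x), sub_zero]
      have hcaj : ca j = 0 := by simp [hca, ha'j]
      have hca0' : ∀ x : A, ∑ i ∈ s.erase j, ca i * x * b i = 0 := by
        intro x
        have h := hca0 x
        rw [← Finset.add_sum_erase s (fun i => ca i * x * b i) hj, hcaj, zero_mul, zero_mul,
          zero_add] at h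
        exact h
      have := IH (s.erase j) (Finset.erase_ssubset hj) ca hca0'
      intro i hi
      rcases eq_or_ne i j with rfl | hne
      · rw [← sub_eq_zero]; exact hcaj
      · rw [← sub_eq_zero]; exact this i (Finset.mem_erase.2 ⟨hne, hi⟩)
    have hcentral : ∀ i ∈ s, ∃ c : F, a' i = algebraMap F A c := by
      intro i hi
      have : a' i ∈ Subalgebra.center F A := by
        rw [Subalgebra.mem_center_iff]
        intro z; exact hcomm z i hi
      rwa [Algebra.IsCentral.mem_center_iff] at this
    choose! lam hlam using hcentral
    have hsum : ∑ i ∈ s, lam i • b i = 0 := by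
      have := ha' 1
      calc ∑ i ∈ s, lam i • b i = ∑ i ∈ s, a' i * 1 * b i := by
            refine Finset.sum_congr rfl fun i hi => ?_
            rw [hlam i hi, mul_one, Algebra.smul_def]
        _ = 0 := ha' 1
    have hall := linearIndependent_iff'.mp hb s lam hsum
    have : (1 : A) = 0 := by
      rw [← ha'j, hlam j hj, hall j hj, map_zero]
    exact one_ne_zero this

end Aux

section Psi

variable (F A : Type*) [Field F] [Ring A] [Algebra F A]

/-- Right multiplication as an algebra hom from the opposite algebra to endomorphisms. -/
private noncomputable def rmulOp : Aᵐᵒᵖ →ₐ[F] Module.End F A where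
  toFun b := LinearMap.mulRight F b.unop
  map_one' := by ext x; simp
  map_mul' b c := by ext x; simp [mul_assoc]
  map_zero' := by ext x; simp
  map_add' b c := by ext x; simp [mul_add]
  commutes' r := by
    ext x
    simp [Module.algebraMap_end_apply, Algebra.algebraMap_eq_smul_one, mul_smul_comm]

/-- The sandwich map `A ⊗ Aᵐᵒᵖ → End_F(A)`. -/
private noncomputable def Psi : A ⊗[F] Aᵐᵒᵖ →ₐ[F] Module.End F A :=
  Algebra.TensorProduct.lift (Algebra.lmul F A) (rmulOp F A)
    (fun x b => by
      show _ * _ = _ * _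
      ext z
      simp [rmulOp, Module.End.mul_apply, mul_assoc])

@[simp] private lemma Psi_tmul (x : A) (y : Aᵐᵒᵖ) (z : A) :
    Psi F A (x ⊗ₜ y) z = x * z * y.unop := by
  simp [Psi, Algebra.TensorProduct.lift_tmul, rmulOp, Module.End.mul_apply, mul_assoc]

end Psi

theorem stmt_8 {F A : Type*} [Field F] [Ring A] [Algebra F A]
    [Algebra.IsCentral F A] [IsSimpleRing A] [FiniteDimensional F A]
    (σ τ : A →ₐ[F] A) (hσ : ⇑σ ≠ 0) (hτ : ⇑τ ≠ 0)
    (δ : A →ₗ[F] A)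
    (hδ : ∀ a b : A, δ (a * b) = δ a * τ b + σ a * δ b) :
    ∃ u : A, ∀ a : A, δ a = u * τ a - σ a * u := by
  classical
  haveI : FiniteDimensional F Aᵐᵒᵖ :=
    Module.Finite.equiv (MulOpposite.opLinearEquiv F : A ≃ₗ[F] Aᵐᵒᵖ)
  -- a basis of the opposite algebra
  set ι := Module.Free.ChooseBasisIndex F Aᵐᵒᵖ
  set B : Module.Basis ι F Aᵐᵒᵖ := Module.Free.chooseBasis F Aᵐᵒᵖ
  -- every tensor has a finsupp representation
  have hrep : ∀ t : A ⊗[F] Aᵐᵒᵖ, ∃ c : ι →₀ A, t = c.sum fun i x => x ⊗ₜ[F] B i := by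
    intro t
    induction t with
    | zero => exact ⟨0, by simp⟩
    | tmul x y =>
      refine ⟨(B.repr y).mapRange (· • x) (zero_smul F x), ?_⟩
      rw [Finsupp.sum_mapRange_index (by simp)]
      have hy : ((B.repr y).sum fun i r => r • B i) = y := by
        conv_rhs => rw [← B.linearCombination_repr y]
        rw [Finsupp.linearCombination_apply]
      conv_lhs => rw [← hy]
      rw [Finsupp.sum, Finsupp.sum, TensorProduct.tmul_sum]
      exact Finset.sum_congr rfl fun i _ => by rw [TensorProduct.tmul_smul, TensorProduct.smul_tmul']
    | add u v hu hv =>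
      obtain ⟨cu, hcu⟩ := hu
      obtain ⟨cv, hcv⟩ := hv
      refine ⟨cu + cv, ?_⟩
      rw [hcu, hcv, Finsupp.sum_add_index (by simp) (by intro i _ b₁ b₂; rw [TensorProduct.add_tmul])]
  -- injectivity of Psi
  have hinj : Function.Injective (Psi F A) := by
    rw [injective_iff_map_eq_zero]
    intro t ht
    obtain ⟨c, rfl⟩ := hrep t
    have hb : LinearIndependent F (fun i => (B i).unop) := by
      have := B.linearIndependent
      have h2 := this.map' (MulOpposite.opLinearEquiv F).symm.toLinearMap
        (LinearEquiv.ker _)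
      exact h2
    have hz : ∀ x : A, ∑ i ∈ c.support, c i * x * (B i).unop = 0 := by
      intro x
      have : Psi F A (c.sum fun i a => a ⊗ₜ[F] B i) x = 0 := by rw [ht]; rfl
      rw [Finsupp.sum, map_sum] at this
      simpa [LinearMap.sum_apply, Psi_tmul] using this
    have := key_indep (F := F) hb c.support c hz
    have hc0 : c = 0 := by
      ext i
      by_cases hi : i ∈ c.support
      · exact this i hi
      · exact Finsupp.notMem_support_iff.mp hi
    rw [hc0]
    simp
  -- surjectivity of Psi by dimension count
  have hsurj : Function.Surjective (Psi F A) := by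
    have hdim : Module.finrank F (A ⊗[F] Aᵐᵒᵖ) = Module.finrank F (Module.End F A) := by
      rw [Module.finrank_tensorProduct, Module.finrank_linearMap,
        (MulOpposite.opLinearEquiv F : A ≃ₗ[F] Aᵐᵒᵖ).finrank_eq]
    exact (LinearMap.injective_iff_surjective_of_finrank_eq_finrank
      (f := (Psi F A).toLinearMap) hdim).mp hinj
  -- a linear functional normalizing 1
  obtain ⟨g, hg⟩ := (Algebra.linearMap F A).exists_leftInverse_of_injective
    (LinearMap.ker_eq_bot.mpr (algebraMap F A).injective)
  set P : Module.End F A := (Algebra.linearMap F A).comp g with hPdef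
  have hPcentral : ∀ x z : A, z * P x = P x * z := by
    intro x z
    simp only [hPdef, LinearMap.comp_apply, Algebra.linearMap_apply]
    exact (Algebra.commutes (g x) z).symm
  have hP1 : P 1 = 1 := by
    have : g 1 = 1 := by
      have := LinearMap.congr_fun hg 1
      simpa using this
    simp [hPdef, this]
  obtain ⟨e, he⟩ := hsurj P
  -- the separability-idempotent identity
  have hsep : ∀ a : A, ((a ⊗ₜ[F] (1 : Aᵐᵒᵖ)) * e) = ((1 ⊗ₜ[F] (MulOpposite.op a)) * e) := by
    intro a
    apply hinj
    rw [map_mul, map_mul, he]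
    ext z
    have h1 : Psi F A (a ⊗ₜ[F] (1 : Aᵐᵒᵖ)) = Algebra.lmul F A a := by
      ext w; simp [Psi_tmul]
    have h2 : Psi F A ((1 : A) ⊗ₜ[F] MulOpposite.op a) z = z * a := by
      simp [Psi_tmul]
    calc (Psi F A (a ⊗ₜ[F] (1 : Aᵐᵒᵖ)) * P) z = a * P z := by
          simp [h1, Module.End.mul_apply]
      _ = P z * a := hPcentral z a
      _ = (Psi F A ((1 : A) ⊗ₜ[F] MulOpposite.op a) * P) z := by
          simp [Module.End.mul_apply, Psi_tmul]
  -- the evaluation linear map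
  set f : A ⊗[F] Aᵐᵒᵖ →ₗ[F] A :=
    TensorProduct.lift (LinearMap.mk₂ F (fun x y => δ x * τ y.unop)
      (fun x₁ x₂ y => by simp [add_mul])
      (fun r x y => by simp [smul_mul_assoc])
      (fun x y₁ y₂ => by simp [mul_add])
      (fun r x y => by simp [mul_smul_comm])) with hfdef
  have hf_tmul : ∀ (x : A) (y : Aᵐᵒᵖ), f (x ⊗ₜ y) = δ x * τ y.unop := fun x y => rfl
  -- identity (i)
  have hi : ∀ (a : A) (t : A ⊗[F] Aᵐᵒᵖ),
      f ((a ⊗ₜ[F] (1 : Aᵐᵒᵖ)) * t) = δ a * τ (Psi F A t 1) + σ a * f t := by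
    intro a t
    induction t with
    | zero => simp
    | tmul x y =>
      simp only [Algebra.TensorProduct.tmul_mul_tmul, one_mul, hf_tmul, Psi_tmul, mul_one]
      rw [hδ, map_mul, add_mul, mul_assoc, mul_assoc]
    | add u v hu hv =>
      simp only [mul_add, map_add, LinearMap.add_apply, hu, hv]
      abel
  -- identity (ii)
  have hii : ∀ (a : A) (t : A ⊗[F] Aᵐᵒᵖ),
      f (((1 : A) ⊗ₜ[F] MulOpposite.op a) * t) = f t * τ a := by
    intro a t
    induction t with
    | zero => simp
    | tmul x y =>
      simp only [Algebra.TensorProduct.tmul_mul_tmul, one_mul, hf_tmul]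
      have h : (MulOpposite.op a * y).unop = y.unop * a := rfl
      rw [h, map_mul, mul_assoc]
    | add u v hu hv =>
      simp only [mul_add, map_add, hu, hv, add_mul]
  refine ⟨f e, fun a => ?_⟩
  have h1 := hi a e
  have h2 := hii a e
  rw [hsep a] at h1
  rw [h2, he, hP1, map_one, mul_one] at h1
  rw [eq_sub_iff_add_eq]
  exact h1.symm
end

section
/- Let G be a finite group and R a field of characteristic p ≥ 0 such that p does not divide |G|. Let σ and τ be R-algebra endomorphisms of the group ring RG that fix the center Z(RG) elementwise. Then every (σ,τ)-derivation δ of RG is (σ,τ)-inner: there exists x ∈ RG with δ(a) = xτ(a) − σ(a)x for all a ∈ RG. -/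
theorem stmt_15 {R G : Type*} [Field R] [Group G] [Fintype G]
    (hchar : ¬ (ringChar R ∣ Fintype.card G))
    (σ τ : MonoidAlgebra R G →ₐ[R] MonoidAlgebra R G)
    (hσ : ∀ z ∈ Subalgebra.center R (MonoidAlgebra R G), σ z = z)
    (hτ : ∀ z ∈ Subalgebra.center R (MonoidAlgebra R G), τ z = z)
    (δ : MonoidAlgebra R G →ₗ[R] MonoidAlgebra R G)
    (hδ : ∀ a b : MonoidAlgebra R G, δ (a * b) = δ a * τ b + σ a * δ b) :
    ∃ x : MonoidAlgebra R G, ∀ a : MonoidAlgebra R G, δ a = x * τ a - σ a * x := by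
  classical
  have hn : (Fintype.card G : R) ≠ 0 := fun h => hchar ((ringChar.spec R _).mp h)
  set f : G →* MonoidAlgebra R G := MonoidAlgebra.of R G with hf
  set S : MonoidAlgebra R G := ∑ g : G, δ (f g) * τ (f g⁻¹) with hS
  have hτinv : ∀ g : G, τ (f g⁻¹) * τ (f g) = 1 := by
    intro g
    rw [← map_mul, ← map_mul, inv_mul_cancel, map_one, map_one]
  have hτ1 : ∀ (g : G) (c : MonoidAlgebra R G), τ (f g) * (τ (f g⁻¹) * c) = c := by
    intro g c
    rw [← mul_assoc, ← map_mul, ← map_mul, mul_inv_cancel, map_one, map_one, one_mul]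
  have key : ∀ h : G, S * τ (f h) = (Fintype.card G : R) • δ (f h) + σ (f h) * S := by
    intro h
    have reindex : ∑ g : G, δ (f (h * g)) * τ (f (h * g)⁻¹) = S :=
      Fintype.sum_equiv (Equiv.mulLeft h) _ _ (fun g => rfl)
    have expand : ∀ g : G, δ (f (h * g)) * τ (f (h * g)⁻¹)
        = δ (f h) * τ (f h⁻¹) + σ (f h) * (δ (f g) * (τ (f g⁻¹) * τ (f h⁻¹))) := by
      intro g
      have h2 : ((h * g)⁻¹ : G) = g⁻¹ * h⁻¹ := mul_inv_rev h g
      rw [h2, map_mul f h g, map_mul f g⁻¹ h⁻¹, hδ, map_mul τ, add_mul]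
      simp only [mul_assoc]
      rw [hτ1]
    have hsum : S = (Fintype.card G : R) • (δ (f h) * τ (f h⁻¹))
        + σ (f h) * (S * τ (f h⁻¹)) := by
      calc S = ∑ g : G, δ (f (h * g)) * τ (f (h * g)⁻¹) := reindex.symm
        _ = ∑ g : G, (δ (f h) * τ (f h⁻¹) + σ (f h) * (δ (f g) * (τ (f g⁻¹) * τ (f h⁻¹)))) := by
            exact Finset.sum_congr rfl fun g _ => expand g
        _ = (Fintype.card G : R) • (δ (f h) * τ (f h⁻¹)) + σ (f h) * (S * τ (f h⁻¹)) := by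
            rw [Finset.sum_add_distrib, Finset.sum_const, ← Finset.mul_sum]
            congr 1
            · simp [Nat.cast_smul_eq_nsmul R]
            · congr 1
              rw [hS, Finset.sum_mul]
              exact Finset.sum_congr rfl fun g _ => by rw [mul_assoc]
    calc S * τ (f h)
        = ((Fintype.card G : R) • (δ (f h) * τ (f h⁻¹))
            + σ (f h) * (S * τ (f h⁻¹))) * τ (f h) := by rw [← hsum]
      _ = (Fintype.card G : R) • (δ (f h) * (τ (f h⁻¹) * τ (f h)))
            + σ (f h) * (S * (τ (f h⁻¹) * τ (f h))) := by
          rw [add_mul, smul_mul_assoc]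
          simp only [mul_assoc]
      _ = (Fintype.card G : R) • δ (f h) + σ (f h) * S := by
          rw [hτinv, mul_one, mul_one]
  refine ⟨(Fintype.card G : R)⁻¹ • S, fun a => ?_⟩
  induction a using MonoidAlgebra.induction_on with
  | of g =>
      have : ((Fintype.card G : R)⁻¹ • S) * τ (f g) - σ (f g) * ((Fintype.card G : R)⁻¹ • S)
          = (Fintype.card G : R)⁻¹ • (S * τ (f g) - σ (f g) * S) := by
        rw [smul_sub, smul_mul_assoc, mul_smul_comm]
      rw [this, key g, add_sub_cancel_right, smul_smul, inv_mul_cancel₀ hn, one_smul]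
  | add a b iha ihb =>
      rw [map_add, iha, ihb, map_add, map_add, mul_add, add_mul]
      abel
  | smul r a ih =>
      rw [map_smul, ih, map_smul, map_smul]
      simp [smul_sub, smul_smul, mul_smul_comm, smul_mul_assoc, mul_comm]
end

section
/- Let G be a finite group and R an integral domain with 1 of characteristic p ≥ 0 with p not dividing |G|. Let σ, τ be R-linear extensions of group homomorphisms of G that fix Z(RG) elementwise. Then every (σ,τ)-derivation of RG is (σ,τ)-inner. -/
theorem stmt_16 {R G : Type*} [CommRing R] [IsDomain R] [Group G] [Fintype G]
    (hchar : ¬ (ringChar R ∣ Fintype.card G))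
    (φ ψ : G →* G)
    (σ τ : MonoidAlgebra R G →ₐ[R] MonoidAlgebra R G)
    (hσof : ∀ g : G, σ (MonoidAlgebra.of R G g) = MonoidAlgebra.of R G (φ g))
    (hτof : ∀ g : G, τ (MonoidAlgebra.of R G g) = MonoidAlgebra.of R G (ψ g))
    (hσ : ∀ z ∈ Subalgebra.center R (MonoidAlgebra R G), σ z = z)
    (hτ : ∀ z ∈ Subalgebra.center R (MonoidAlgebra R G), τ z = z)
    (δ : MonoidAlgebra R G →ₗ[R] MonoidAlgebra R G)
    (hδ : ∀ a b : MonoidAlgebra R G, δ (a * b) = δ a * τ b + σ a * δ b) :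
    ∃ x : MonoidAlgebra R G, ∀ a : MonoidAlgebra R G, δ a = x * τ a - σ a * x := by
  classical
  -- δ 1 = 0
  have hone : δ 1 = 0 := by
    have h := hδ 1 1
    rw [mul_one, map_one τ, map_one σ, mul_one, one_mul] at h
    exact left_eq_add.mp h
  -- the cocycle coefficients
  obtain ⟨c, hcdef⟩ : ∃ c : G → G → R, ∀ g k, c g k = (δ (MonoidAlgebra.of R G g)).coeff (k * ψ g) :=
    ⟨_, fun _ _ => rfl⟩
  have hc : ∀ g h k : G, c (g * h) k = c g k + c h ((φ g)⁻¹ * k * ψ g) := by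
    intro g h k
    rw [hcdef, hcdef, hcdef, map_mul (MonoidAlgebra.of R G) g h, hδ, hσof, hτof,
      MonoidAlgebra.of_apply, MonoidAlgebra.of_apply, MonoidAlgebra.of_apply,
      MonoidAlgebra.coeff_add, Finsupp.add_apply, MonoidAlgebra.coeff_mul_single_apply,
      MonoidAlgebra.coeff_single_mul_apply, one_mul, mul_one, map_mul ψ g h]
    have e1 : k * (ψ g * ψ h) * (ψ h)⁻¹ = k * ψ g := by group
    have e2 : (φ g)⁻¹ * (k * (ψ g * ψ h)) = (φ g)⁻¹ * k * ψ g * ψ h := by group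
    rw [e1, e2]
  have hc1 : ∀ k, c 1 k = 0 := by
    intro k
    rw [hcdef, map_one, hone]
    rfl
  have hcinv : ∀ g k, c g⁻¹ ((φ g)⁻¹ * k * ψ g) = - c g k := by
    intro g k
    have h := hc g g⁻¹ k
    rw [mul_inv_cancel, hc1] at h
    exact eq_neg_of_add_eq_zero_right h.symm
  -- vanishing on stabilizers
  have hstab : ∀ w k, (φ w)⁻¹ * k * ψ w = k → c w k = 0 := by
    intro w k hfix
    have hpow : ∀ m : ℕ, c (w ^ m) k = m • c w k := by
      intro m
      induction m with
      | zero => simpa using hc1 k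
      | succ m ih =>
        have h := hc w (w ^ m) k
        rw [hfix, ih] at h
        rw [pow_succ', h, succ_nsmul]
        ring
    have h := hpow (Fintype.card G)
    rw [pow_card_eq_one, hc1] at h
    have hn : ((Fintype.card G : R)) ≠ 0 := by
      haveI := ringChar.charP R
      exact fun h0 => hchar ((CharP.cast_eq_zero_iff R (ringChar R) _).mp h0)
    have h2 : (Fintype.card G : R) * c w k = 0 := by rw [← nsmul_eq_mul, ← h]
    rcases mul_eq_zero.mp h2 with h3 | h3
    · exact absurd h3 hn
    · exact h3
  -- the action
  obtain ⟨act, hact⟩ : ∃ act : G → G → G, ∀ g k, act g k = φ g * k * (ψ g)⁻¹ :=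
    ⟨_, fun _ _ => rfl⟩
  have act_one : ∀ k, act 1 k = k := by intro k; simp [hact]
  have act_mul : ∀ g h k, act g (act h k) = act (g * h) k := by
    intro g h k
    rw [hact, hact, hact, map_mul, map_mul]
    group
  have act_inv : ∀ g k, act g⁻¹ k = (φ g)⁻¹ * k * ψ g := by
    intro g k
    rw [hact, map_inv, map_inv, inv_inv]
  -- orbit setoid, basepoints and sections
  have hsetoid : Equivalence (fun k k' : G => ∃ g, act g k = k') := by
    constructor
    · exact fun k => ⟨1, act_one k⟩
    · rintro k k' ⟨g, rfl⟩
      exact ⟨g⁻¹, by rw [act_mul, inv_mul_cancel, act_one]⟩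
    · rintro k k' k'' ⟨g, rfl⟩ ⟨g', rfl⟩
      exact ⟨g' * g, (act_mul g' g k).symm⟩
  let st : Setoid G := ⟨_, hsetoid⟩
  have hrel : ∀ k : G, ∃ g, act g k = (Quotient.mk st k).out := by
    intro k
    have h : Quotient.mk st ((Quotient.mk st k).out) = Quotient.mk st k := Quotient.out_eq _
    exact hsetoid.symm (Quotient.exact h)
  let b : G → G := fun k => (Quotient.mk st k).out
  let s : G → G := fun k => (hrel k).choose
  have hs : ∀ k, act (s k) k = b k := fun k => (hrel k).choose_spec
  have hb : ∀ g k, b (act g k) = b k := by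
    intro g k
    show (Quotient.mk st (act g k)).out = (Quotient.mk st k).out
    congr 1
    exact Quotient.sound ⟨g⁻¹, by rw [act_mul, inv_mul_cancel, act_one]⟩
  -- the coboundary data
  let a : G → R := fun k => - c (s k) (b k)
  have hkey : ∀ g k, a k - a (act g⁻¹ k) = c g k := by
    intro g k
    have hk0 : b (act g⁻¹ k) = b k := hb g⁻¹ k
    set k' := act g⁻¹ k with hk'
    set u := s k with hu'
    set v := s k' with hv'
    have hu : act u k = b k := hs k
    have hv : act v k' = b k := by rw [hs k', hk0]
    have h1 : act u⁻¹ (b k) = k := by rw [← hu, act_mul, inv_mul_cancel, act_one]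
    have hwfix : act (v * g⁻¹ * u⁻¹) (b k) = b k := by
      rw [← act_mul, ← act_mul, h1, ← hk', hv]
    have hwfix' : (φ (v * g⁻¹ * u⁻¹))⁻¹ * (b k) * ψ (v * g⁻¹ * u⁻¹) = b k := by
      rw [← act_inv]
      conv_lhs => rw [← hwfix]
      rw [act_mul, inv_mul_cancel, act_one]
    have h2 : c ((v * g⁻¹ * u⁻¹) * u) (b k) = c u (b k) := by
      rw [hc, hwfix', hstab _ _ hwfix', zero_add]
    have h3 : (v * g⁻¹ * u⁻¹) * u = v * g⁻¹ := by group
    rw [h3] at h2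
    have h4 : c (v * g⁻¹) (b k) = c v (b k) + c g⁻¹ ((φ v)⁻¹ * (b k) * ψ v) := hc v g⁻¹ (b k)
    have h5 : (φ v)⁻¹ * (b k) * ψ v = k' := by
      rw [← act_inv, ← hv, act_mul, inv_mul_cancel, act_one]
    have h6 : c g⁻¹ k' = - c g k := by
      rw [hk', act_inv]
      exact hcinv g k
    rw [h5, h6] at h4
    rw [h4] at h2
    show -c u (b k) - -c v (b k') = c g k
    rw [hk0, ← h2]
    ring
  -- the inner element
  let x : MonoidAlgebra R G := ∑ k : G, MonoidAlgebra.single k (a k)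
  have hxapp : ∀ k, x.coeff k = a k := by
    intro k
    show (∑ j : G, MonoidAlgebra.single j (a j)).coeff k = a k
    rw [MonoidAlgebra.coeff_sum, Finset.sum_apply']
    simp [Finsupp.single_apply]
  have hof : ∀ g, δ (MonoidAlgebra.of R G g) =
      x * τ (MonoidAlgebra.of R G g) - σ (MonoidAlgebra.of R G g) * x := by
    intro g
    rw [hσof, hτof, MonoidAlgebra.of_apply, MonoidAlgebra.of_apply, MonoidAlgebra.of_apply,
      eq_sub_iff_add_eq]
    ext m
    rw [MonoidAlgebra.coeff_add, Finsupp.add_apply, MonoidAlgebra.coeff_single_mul_apply,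
      MonoidAlgebra.coeff_mul_single_apply, one_mul, mul_one, hxapp, hxapp]
    have h := hkey g (m * (ψ g)⁻¹)
    rw [act_inv, hcdef, MonoidAlgebra.of_apply] at h
    have e1 : (φ g)⁻¹ * (m * (ψ g)⁻¹) * ψ g = (φ g)⁻¹ * m := by group
    have e2 : m * (ψ g)⁻¹ * ψ g = m := by group
    rw [e1, e2] at h
    rw [← h]
    ring
  refine ⟨x, ?_⟩
  intro p
  induction p using MonoidAlgebra.induction_linear with
  | zero => simp
  | add f g hf hg =>
    rw [map_add, map_add, map_add, hf, hg, mul_add, add_mul]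
    abel
  | single g r =>
    have h : (MonoidAlgebra.single g r : MonoidAlgebra R G) = r • MonoidAlgebra.of R G g := by
      rw [MonoidAlgebra.of_apply, MonoidAlgebra.smul_single, smul_eq_mul, mul_one]
    rw [h, map_smul, map_smul, map_smul, hof g, smul_sub, mul_smul_comm, smul_mul_assoc]
end

section
/- Let G be a finite group and σ, τ be ℤ-linear extensions of group homomorphisms of G to endomorphisms of the integral group ring ℤG that fix the center Z(ℤG) elementwise. Then every (σ,τ)-derivation of ℤG is (σ,τ)-inner. -/
section Stmt17Aux

variable {G : Type*} [Group G]

/-- The twisted conjugation action `g · k = φ g * k * (ψ g)⁻¹`. -/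
def stmt17Act (φ ψ : G →* G) (g k : G) : G := φ g * k * (ψ g)⁻¹

lemma stmt17Act_one (φ ψ : G →* G) (k : G) : stmt17Act φ ψ 1 k = k := by
  simp [stmt17Act]

lemma stmt17Act_mul (φ ψ : G →* G) (g h k : G) :
    stmt17Act φ ψ (g * h) k = stmt17Act φ ψ g (stmt17Act φ ψ h k) := by
  simp [stmt17Act, mul_assoc]

lemma stmt17Act_inv_act (φ ψ : G →* G) (g k : G) :
    stmt17Act φ ψ g⁻¹ (stmt17Act φ ψ g k) = k := by
  rw [← stmt17Act_mul, inv_mul_cancel, stmt17Act_one]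

lemma stmt17Act_act_inv (φ ψ : G →* G) (g k : G) :
    stmt17Act φ ψ g (stmt17Act φ ψ g⁻¹ k) = k := by
  rw [← stmt17Act_mul, mul_inv_cancel, stmt17Act_one]

/-- Orbit equivalence relation for the twisted conjugation action. -/
def stmt17Rel (φ ψ : G →* G) : Setoid G where
  r k k' := ∃ g, stmt17Act φ ψ g k = k'
  iseqv := ⟨fun k => ⟨1, stmt17Act_one φ ψ k⟩,
    fun ⟨g, hg⟩ => ⟨g⁻¹, by rw [← hg, stmt17Act_inv_act]⟩,
    fun ⟨g, hg⟩ ⟨h, hh⟩ => ⟨h * g, by rw [stmt17Act_mul, hg, hh]⟩⟩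

end Stmt17Aux

theorem stmt_17 {G : Type*} [Group G] [Fintype G]
    (φ ψ : G →* G)
    (σ τ : MonoidAlgebra ℤ G →ₐ[ℤ] MonoidAlgebra ℤ G)
    (hσof : ∀ g : G, σ (MonoidAlgebra.of ℤ G g) = MonoidAlgebra.of ℤ G (φ g))
    (hτof : ∀ g : G, τ (MonoidAlgebra.of ℤ G g) = MonoidAlgebra.of ℤ G (ψ g))
    (hσ : ∀ z ∈ Subalgebra.center ℤ (MonoidAlgebra ℤ G), σ z = z)
    (hτ : ∀ z ∈ Subalgebra.center ℤ (MonoidAlgebra ℤ G), τ z = z)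
    (δ : MonoidAlgebra ℤ G →ₗ[ℤ] MonoidAlgebra ℤ G)
    (hδ : ∀ a b : MonoidAlgebra ℤ G, δ (a * b) = δ a * τ b + σ a * δ b) :
    ∃ x : MonoidAlgebra ℤ G, ∀ a : MonoidAlgebra ℤ G, δ a = x * τ a - σ a * x := by
  classical
  set of := MonoidAlgebra.of ℤ G with hof
  -- δ 1 = 0
  have hδ1 : δ 1 = 0 := by
    have h2 := hδ 1 1
    simp only [mul_one, map_one, one_mul] at h2
    exact add_eq_left.mp h2.symm
  -- the cocycle f g = δ(g) τ(g)⁻¹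
  set f : G → MonoidAlgebra ℤ G := fun g => δ (of g) * of ((ψ g)⁻¹) with hfdef
  have hofmul : ∀ a b : G, of (a * b) = of a * of b := fun a b => map_mul of a b
  have hofinv : ∀ a : G, of a * of a⁻¹ = 1 := by
    intro a; rw [← hofmul, mul_inv_cancel, map_one]
  have hf1 : f 1 = 0 := by
    simp only [hfdef, map_one, hδ1, inv_one, zero_mul]
  have hcoc : ∀ g h : G,
      f (g * h) = f g + of (φ g) * f h * of ((ψ g)⁻¹) := by
    intro g h
    have h1 : δ (of (g * h)) = δ (of g) * of (ψ h) + of (φ g) * δ (of h) := by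
      rw [hofmul, hδ, hτof, hσof]
    have h2 : of ((ψ (g * h))⁻¹) = of ((ψ h)⁻¹) * of ((ψ g)⁻¹) := by
      rw [← hofmul, map_mul, mul_inv_rev]
    calc f (g * h) = δ (of (g * h)) * of ((ψ (g * h))⁻¹) := rfl
      _ = (δ (of g) * of (ψ h) + of (φ g) * δ (of h)) *
            (of ((ψ h)⁻¹) * of ((ψ g)⁻¹)) := by rw [h1, h2]
      _ = δ (of g) * (of (ψ h) * of ((ψ h)⁻¹)) * of ((ψ g)⁻¹) +
            of (φ g) * (δ (of h) * of ((ψ h)⁻¹)) * of ((ψ g)⁻¹) := by noncomm_ring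
      _ = f g + of (φ g) * f h * of ((ψ g)⁻¹) := by
            rw [hofinv, mul_one]
  -- coefficient of the twisted conjugate
  have hconjcoef : ∀ (g : G) (y : MonoidAlgebra ℤ G) (k : G),
      (of (φ g) * y * of ((ψ g)⁻¹)).coeff k = y.coeff (stmt17Act φ ψ g⁻¹ k) := by
    intro g y k
    have h1 : of (φ g) * y * of ((ψ g)⁻¹)
        = MonoidAlgebra.single (φ g) 1 * y * MonoidAlgebra.single ((ψ g)⁻¹) (1 : ℤ) := rfl
    rw [h1, MonoidAlgebra.coeff_mul_single_apply, MonoidAlgebra.coeff_single_mul_apply]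
    simp [stmt17Act, mul_assoc]
  have haddapp : ∀ (a b : MonoidAlgebra ℤ G) (k : G), (a + b).coeff k = a.coeff k + b.coeff k :=
    fun a b k => Finsupp.add_apply a.coeff b.coeff k
  have hsubapp : ∀ (a b : MonoidAlgebra ℤ G) (k : G), (a - b).coeff k = a.coeff k - b.coeff k :=
    fun a b k => Finsupp.sub_apply a.coeff b.coeff k
  -- coefficients of the cocycle
  set c : G → G → ℤ := fun g k => (f g).coeff k with hcdef
  have hccoc : ∀ g h k : G, c (g * h) k = c g k + c h (stmt17Act φ ψ g⁻¹ k) := by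
    intro g h k
    have := congrArg (fun z : MonoidAlgebra ℤ G => z.coeff k) (hcoc g h)
    rw [haddapp, hconjcoef g (f h) k] at this
    exact this
  have hc1 : ∀ k, c 1 k = 0 := by intro k; simp [hcdef, hf1]
  -- vanishing on stabilizers
  have hpow : ∀ (n : ℕ) (s k : G), stmt17Act φ ψ s k = k →
      c (s ^ n) k = n * c s k := by
    intro n s k hs
    have hsn : ∀ m : ℕ, stmt17Act φ ψ (s ^ m) k = k := by
      intro m
      induction m with
      | zero => simpa using stmt17Act_one φ ψ k
      | succ m ih => rw [pow_succ, stmt17Act_mul, hs, ih]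
    have hsinv : ∀ m : ℕ, stmt17Act φ ψ (s ^ m)⁻¹ k = k := by
      intro m
      conv_lhs => rw [← hsn m]
      rw [stmt17Act_inv_act]
    induction n with
    | zero => simpa using hc1 k
    | succ n ih =>
      rw [pow_succ, hccoc, hsinv]
      push_cast
      rw [ih]
      ring
  have hstab : ∀ s k : G, stmt17Act φ ψ s k = k → c s k = 0 := by
    intro s k hs
    have ho : (orderOf s : ℤ) * c s k = 0 := by
      rw [← hpow (orderOf s) s k hs, pow_orderOf_eq_one, hc1]
    have hpos : (0 : ℤ) < orderOf s := by exact_mod_cast orderOf_pos s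
    exact (mul_eq_zero.mp ho).resolve_left (by positivity)
  -- well-definedness along orbits
  have hwd : ∀ g₁ g₂ k₀ : G, stmt17Act φ ψ g₁ k₀ = stmt17Act φ ψ g₂ k₀ →
      c g₁ (stmt17Act φ ψ g₁ k₀) = c g₂ (stmt17Act φ ψ g₂ k₀) := by
    intro g₁ g₂ k₀ h12
    have hs : stmt17Act φ ψ (g₁⁻¹ * g₂) k₀ = k₀ := by
      rw [stmt17Act_mul, ← h12, stmt17Act_inv_act]
    have hrw : g₂ = g₁ * (g₁⁻¹ * g₂) := by group
    rw [← h12]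
    conv_rhs => rw [hrw]
    rw [hccoc, stmt17Act_inv_act, hstab _ _ hs, add_zero]
  -- orbit representatives and the 0-cochain d
  set S := stmt17Rel φ ψ with hS
  have hrepex : ∀ k : G, ∃ g, stmt17Act φ ψ g (Quotient.mk S k).out = k := by
    intro k
    exact Quotient.exact (Quotient.out_eq (Quotient.mk S k))
  set t : G → G := fun k => Classical.choose (hrepex k) with htdef
  have ht : ∀ k, stmt17Act φ ψ (t k) (Quotient.mk S k).out = k :=
    fun k => Classical.choose_spec (hrepex k)
  have hrepinv : ∀ g k : G,
      (Quotient.mk S (stmt17Act φ ψ g⁻¹ k)).out = (Quotient.mk S k).out := by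
    intro g k
    have : Quotient.mk S (stmt17Act φ ψ g⁻¹ k) = Quotient.mk S k :=
      Quotient.sound ⟨g, stmt17Act_act_inv φ ψ g k⟩
    rw [this]
  set d : G → ℤ := fun k => c (t k) k with hddef
  -- the cocycle is the coboundary of d
  have hD : ∀ g k : G, c g k = d k - d (stmt17Act φ ψ g⁻¹ k) := by
    intro g k
    set k' := stmt17Act φ ψ g⁻¹ k with hk'
    have h1 : stmt17Act φ ψ (t k') (Quotient.mk S k).out = k' := by
      rw [← hrepinv g k]; exact ht k'
    have h2 : stmt17Act φ ψ (g * t k') (Quotient.mk S k).out = k := by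
      rw [stmt17Act_mul, h1, hk', stmt17Act_act_inv]
    have h3 := hwd (t k) (g * t k') (Quotient.mk S k).out (by rw [ht k, h2])
    rw [ht k, h2] at h3
    have h4 : c (g * t k') k = c g k + c (t k') k' := by
      rw [hccoc, ← hk']
    have h5 : d k = c g k + d k' := by
      rw [hddef]
      simp only
      rw [h3, h4]
    omega
  -- the element x
  set x : MonoidAlgebra ℤ G := MonoidAlgebra.ofCoeff (Finsupp.equivFunOnFinite.symm d) with hxdef
  have hxapp : ∀ k, x.coeff k = d k := fun k => rfl
  refine ⟨x, ?_⟩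
  -- first on group elements
  have hgrp : ∀ g : G, δ (of g) = x * of (ψ g) - of (φ g) * x := by
    intro g
    have hfg : f g = x - of (φ g) * x * of ((ψ g)⁻¹) := by
      ext k
      have h0 := hD g k
      rw [hsubapp, hconjcoef g x k]
      exact h0
    have := congrArg (fun z => z * of (ψ g)) hfg
    simp only [hfdef] at this
    rw [mul_assoc, ← hofmul, inv_mul_cancel, map_one, mul_one] at this
    rw [this, sub_mul, mul_assoc, ← hofmul, inv_mul_cancel, map_one, mul_one]
  -- extend by ℤ-linearity
  intro a
  induction a using MonoidAlgebra.induction_linear with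
  | zero => simp [hδ1]
  | add a b ha hb =>
    have : (a + b : MonoidAlgebra ℤ G) = a + b := rfl
    rw [map_add δ, map_add τ, map_add σ, ha, hb, mul_add, add_mul]
    abel
  | single g n =>
    have hsingle : (MonoidAlgebra.single g n : MonoidAlgebra ℤ G) = n • of g := by
      show MonoidAlgebra.single g n = n • of g
      rw [hof, MonoidAlgebra.of_apply, MonoidAlgebra.smul_single', mul_one]
    rw [hsingle, map_smul δ, map_smul τ, map_smul σ, hgrp g, hτof, hσof,
      smul_sub, mul_smul_comm, smul_mul_assoc]
end

section
/- Let G be a finite group, δ a (σ,τ)-derivation of ℤG with σ, τ ℤ-linear extensions of group homomorphisms of G fixing Z(ℤG) elementwise, and suppose x = Σ_g x_g g ∈ ℚG satisfies δ(a) = xτ(a) − σ(a)x for all a ∈ ℤG. Then for u = Σ_g {x_g} g, where {x_g} ∈ [0,1) is the fractional part of x_g, one has x − u ∈ ℤG and δ(a) = (x−u)τ(a) − σ(a)(x−u) for all a ∈ ℤG. -/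
theorem stmt_19 {G : Type*} [Group G] [Fintype G]
    (φ ψ : G →* G)
    (σ τ : MonoidAlgebra ℤ G →ₐ[ℤ] MonoidAlgebra ℤ G)
    (hσof : ∀ g : G, σ (MonoidAlgebra.of ℤ G g) = MonoidAlgebra.of ℤ G (φ g))
    (hτof : ∀ g : G, τ (MonoidAlgebra.of ℤ G g) = MonoidAlgebra.of ℤ G (ψ g))
    (hσ : ∀ z ∈ Subalgebra.center ℤ (MonoidAlgebra ℤ G), σ z = z)
    (hτ : ∀ z ∈ Subalgebra.center ℤ (MonoidAlgebra ℤ G), τ z = z)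
    (σ' τ' : MonoidAlgebra ℚ G →ₐ[ℚ] MonoidAlgebra ℚ G)
    (hσ'of : ∀ g : G, σ' (MonoidAlgebra.of ℚ G g) = MonoidAlgebra.of ℚ G (φ g))
    (hτ'of : ∀ g : G, τ' (MonoidAlgebra.of ℚ G g) = MonoidAlgebra.of ℚ G (ψ g))
    (δ : MonoidAlgebra ℤ G →ₗ[ℤ] MonoidAlgebra ℤ G)
    (hδ : ∀ a b : MonoidAlgebra ℤ G, δ (a * b) = δ a * τ b + σ a * δ b)
    -- the coefficientwise cast `ι : ℤG → ℚG`
    (ι : MonoidAlgebra ℤ G → MonoidAlgebra ℚ G)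
    (hι : ∀ a : MonoidAlgebra ℤ G, ι a = MonoidAlgebra.ofCoeff (Finsupp.mapRange (Int.cast : ℤ → ℚ) Int.cast_zero a.coeff))
    (x : MonoidAlgebra ℚ G)
    (hx : ∀ a : MonoidAlgebra ℤ G, ι (δ a) = x * τ' (ι a) - σ' (ι a) * x)
    (u : MonoidAlgebra ℚ G)
    (hu : u = MonoidAlgebra.ofCoeff (Finsupp.mapRange (fun q : ℚ => Int.fract q) Int.fract_zero x.coeff)) :
    (∃ y : MonoidAlgebra ℤ G, ι y = x - u) ∧
      ∀ a : MonoidAlgebra ℤ G, ι (δ a) = (x - u) * τ' (ι a) - σ' (ι a) * (x - u) := by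
  classical
  have hιapp : ∀ (a : MonoidAlgebra ℤ G) (g : G), (ι a).coeff g = ((a.coeff g : ℤ) : ℚ) := by
    intro a g; rw [hι]; simp [MonoidAlgebra.coeff_ofCoeff, Finsupp.mapRange_apply]
  have huapp : ∀ g : G, u.coeff g = Int.fract (x.coeff g) := by
    intro g; rw [hu]; simp [MonoidAlgebra.coeff_ofCoeff, Finsupp.mapRange_apply]
  have hιof : ∀ g : G, ι (MonoidAlgebra.of ℤ G g) = MonoidAlgebra.of ℚ G g := by
    intro g; rw [hι]
    simp [MonoidAlgebra.of_apply, MonoidAlgebra.coeff_single, Finsupp.mapRange_single, MonoidAlgebra.ofCoeff_single]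
  -- key fractional-part relation
  have key : ∀ h g : G, Int.fract (x.coeff (g * (ψ h)⁻¹)) = Int.fract (x.coeff ((φ h)⁻¹ * g)) := by
    intro h g
    have H := congrArg (fun f : MonoidAlgebra ℚ G => f.coeff g) (hx (MonoidAlgebra.of ℤ G h))
    simp only [hιof, hτ'of, hσ'of] at H
    rw [hιapp] at H
    rw [MonoidAlgebra.coeff_sub, Finsupp.sub_apply] at H
    simp only [MonoidAlgebra.of_apply] at H
    rw [MonoidAlgebra.coeff_mul_single_apply, MonoidAlgebra.coeff_single_mul_apply,
      mul_one, one_mul] at H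
    exact Int.fract_eq_fract.mpr ⟨(δ (MonoidAlgebra.of ℤ G h)).coeff g, H.symm⟩
  -- u single commutation
  have ucomm : ∀ h : G,
      MonoidAlgebra.of ℚ G (φ h) * u = u * MonoidAlgebra.of ℚ G (ψ h) := by
    intro h
    refine MonoidAlgebra.coeff_injective (Finsupp.ext fun g => ?_)
    rw [MonoidAlgebra.of_apply, MonoidAlgebra.of_apply,
      MonoidAlgebra.coeff_mul_single_apply, MonoidAlgebra.coeff_single_mul_apply,
      mul_one, one_mul, huapp, huapp, key]
  -- general commutation
  have comm : ∀ a : MonoidAlgebra ℤ G, σ' (ι a) * u = u * τ' (ι a) := by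
    intro a
    induction a using MonoidAlgebra.induction_linear with
    | zero => simp [hι]
    | add a b ha hb =>
        have : ι (a + b) = ι a + ι b := by
          rw [hι, hι, hι, MonoidAlgebra.coeff_add, Finsupp.mapRange_add (fun a b => Int.cast_add a b),
              MonoidAlgebra.ofCoeff_add]
        rw [this, map_add, map_add, add_mul, mul_add, ha, hb]
    | single g n =>
        have h1 : ι (MonoidAlgebra.single g n) = (n : ℚ) • MonoidAlgebra.of ℚ G g := by
          rw [hι, MonoidAlgebra.coeff_single, Finsupp.mapRange_single, MonoidAlgebra.ofCoeff_single,
            MonoidAlgebra.of_apply,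
            MonoidAlgebra.smul_single', mul_one]
        rw [h1, map_smul, map_smul, hσ'of, hτ'of, smul_mul_assoc, mul_smul_comm,
          ucomm]
  constructor
  · refine ⟨MonoidAlgebra.ofCoeff (Finsupp.mapRange Int.floor Int.floor_zero x.coeff), ?_⟩
    refine MonoidAlgebra.coeff_injective (Finsupp.ext fun g => ?_)
    rw [hιapp, MonoidAlgebra.coeff_ofCoeff, Finsupp.mapRange_apply, MonoidAlgebra.coeff_sub,
      Finsupp.sub_apply, huapp]
    simp [Int.self_sub_fract]
  · intro a
    rw [hx a, sub_mul, mul_sub, comm a]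
    abel
end
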